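/- Convergence of multi-parameter Tikhonov regularisation: assume F(x₀) = y for some x₀ ∈ D, y^(l) → y in σ, F^(l) → F in the d_{K,L}-sense, (S(y,y^(l)) + d_{K,L}(F^(l),F)) / Σ_k α_k^(l) → 0 and Σ_k α_k^(l) → 0, where K := {x : R_k(x) ≤ R_k(x₀)+1 for some k} and L := {y} ∪ {y^(l)}. Let x^(l) minimise T(·; α^(l), y^(l), F^(l)) and suppose the normalised parameters ᾱ^(l) := α^(l)/Σ_k α_k^(l) converge to ᾱ. Then every subsequence of {x^(l)} has a further subsequence τ-converging to some x† with F(x†) = y and Σ_k ᾱ_k R_k(x†) ≤ inf{ Σ_k ᾱ_k R_k(x) : x ∈ D, F(x) = y }. -/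

import Mathlib

open Filter Topology
open scoped ENNReal

/-- Convergence of a sequence in `Y` with respect to the topology `σ` induced by the
pseudo-metrics `d^(z)(y,ỹ) = |S(z,y) − S(z,ỹ)|`: `y^(l) → p` iff `S(z, y^(l)) → S(z,p)`
for every `z ∈ Y`. -/
def SigmaTendsto {Y : Type*} (S : Y → Y → ℝ) (y : ℕ → Y) (p : Y) : Prop :=
  ∀ z : Y, Tendsto (fun l => S z (y l)) atTop (nhds (S z p))

/-- Sequential compactness of a subset of `Y` with respect to the topology `σ`. -/
def SeqCompactSigma {Y : Type*} (S : Y → Y → ℝ) (L : Set Y) : Prop :=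
  ∀ y : ℕ → Y, (∀ l, y l ∈ L) →
    ∃ p ∈ L, ∃ φ : ℕ → ℕ, StrictMono φ ∧ SigmaTendsto S (fun l => y (φ l)) p

/-- Sequential lower semi-continuity of `(x,y) ↦ S(F(x),y)` with respect to `τ × σ`. -/
def SeqLSCop {X Y : Type*} [TopologicalSpace X] (S : Y → Y → ℝ) (F : X → Y) : Prop :=
  ∀ (x : ℕ → X) (x₀ : X) (y : ℕ → Y) (y₀ : Y),
    Tendsto x atTop (nhds x₀) → SigmaTendsto S y y₀ →
      S (F x₀) y₀ ≤ liminf (fun l => S (F (x l)) (y l)) atTop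

/-- The pseudo-metric `d_{K,L}(F,G) = sup {|S(F(x),z) − S(G(x),z)| : x ∈ K, z ∈ L}`
(with values in `[0,∞]`). -/
noncomputable def dKL {X Y : Type*} (S : Y → Y → ℝ) (K : Set X) (L : Set Y)
    (F G : X → Y) : ℝ≥0∞ :=
  ⨆ x ∈ K, ⨆ z ∈ L, ENNReal.ofReal |S (F x) z - S (G x) z|

/-- Convergence of operators `F^(l) → F` with respect to `τ`: `d_{K,L}(F^(l),F) → 0`
for every sequentially `τ`-compact `K ⊆ X` and sequentially `σ`-compact `L ⊆ Y`. -/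
def OpTendsto {X Y : Type*} [TopologicalSpace X] (S : Y → Y → ℝ)
    (F' : ℕ → X → Y) (F : X → Y) : Prop :=
  ∀ (K : Set X) (L : Set Y), IsSeqCompact K → SeqCompactSigma S L →
    Tendsto (fun l => dKL S K L (F' l) F) atTop (nhds 0)
/-- Sequential `τ`-coercivity: every sequence on which `R` is (finitely) bounded has a
`τ`-convergent subsequence. -/
def SeqCoercive {X : Type*} [TopologicalSpace X] (R : X → ℝ≥0∞) : Prop :=
  ∀ (u : ℕ → X) (c : ℝ≥0∞), c ≠ ⊤ → (∀ l, R (u l) ≤ c) →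
    ∃ (x : X) (φ : ℕ → ℕ), StrictMono φ ∧ Tendsto (fun l => u (φ l)) atTop (nhds x)

/-- Sequential `τ`-lower semi-continuity of `R : X → [0,∞]`. -/
def SeqLSC {X : Type*} [TopologicalSpace X] (R : X → ℝ≥0∞) : Prop :=
  ∀ (u : ℕ → X) (x : X), Tendsto u atTop (nhds x) →
    R x ≤ liminf (fun l => R (u l)) atTop

/-- The class `F(τ)`: `(x,y) ↦ S(F(x),y)` is sequentially `(τ×σ)`-lower semi-continuous and
the joint domain `D` of the regularisation terms is dense in the required sense. -/
def MemFtau {X Y : Type*} [TopologicalSpace X] {n : ℕ} (S : Y → Y → ℝ)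
    (R : Fin n → X → ℝ≥0∞) (F : X → Y) : Prop :=
  SeqLSCop S F ∧
  ∀ (x : X) (y : Y), ∃ u : ℕ → X,
    (∀ l k, R k (u l) ≠ ⊤) ∧
    Tendsto u atTop (nhds x) ∧
    (∀ k, Tendsto (fun l => R k (u l)) atTop (nhds (R k x))) ∧
    Tendsto (fun l => S (F (u l)) y) atTop (nhds (S (F x) y))

/-- The multi-parameter Tikhonov functional
`T(x; α, y, F) = S(F(x),y) + Σ_k α_k R_k(x)`, with the convention `α_k R_k(x) = 0` when
`α_k = 0` and `R_k(x) = ∞`. -/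
noncomputable def Tik {X Y : Type*} {n : ℕ} (S : Y → Y → ℝ) (R : Fin n → X → ℝ≥0∞)
    (α : Fin n → ℝ) (y : Y) (F : X → Y) (x : X) : ℝ≥0∞ :=
  ENNReal.ofReal (S (F x) y) + ∑ k, ENNReal.ofReal (α k) * R k x

section AuxLiminf

open ENNReal

/-- Superadditivity of `liminf` in `ℝ≥0∞`. -/
lemma aux_le_liminf_add (u v : ℕ → ℝ≥0∞) :
    liminf u atTop + liminf v atTop ≤ liminf (fun j => u j + v j) atTop := by
  refine (le_liminf_iff (by isBoundedDefault) (by isBoundedDefault)).2 fun c hc => ?_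
  rcases lt_or_ge c (liminf u atTop) with h | h
  · filter_upwards [eventually_lt_of_lt_liminf h] with j hj
    exact hj.trans_le le_self_add
  · have hctop : c ≠ ⊤ := hc.ne_top
    have hA : liminf u atTop ≠ ⊤ := ne_top_of_le_ne_top hctop h
    have hsub : c - liminf u atTop < liminf v atTop :=
      (ENNReal.sub_lt_iff_lt_right hA h).2 (by rwa [add_comm] at hc)
    obtain ⟨b, hb1, hb2⟩ := exists_between hsub
    rcases le_or_gt c b with hcb | hbc
    · filter_upwards [eventually_lt_of_lt_liminf hb2] with j hj
      exact (hcb.trans_lt hj).trans_le le_add_self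
    · have hbtop : b ≠ ⊤ := hbc.ne_top
      have hca : c < b + liminf u atTop := (ENNReal.sub_lt_iff_lt_right hA h).1 hb1
      have ha : c - b < liminf u atTop :=
        (ENNReal.sub_lt_iff_lt_right hbtop hbc.le).2 (by rwa [add_comm] at hca)
      filter_upwards [eventually_lt_of_lt_liminf ha, eventually_lt_of_lt_liminf hb2]
        with j h1 h2
      calc c = (c - b) + b := (tsub_add_cancel_of_le hbc.le).symm
      _ < u j + v j := ENNReal.add_lt_add h1 h2

lemma aux_mul_liminf (c : ℝ≥0∞) (u : ℕ → ℝ≥0∞) :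
    c * liminf u atTop ≤ liminf (fun j => c * u j) atTop := by
  have h := ENNReal.le_liminf_mul (f := (atTop : Filter ℕ)) (u := fun _ => c) (v := u)
  simpa [liminf_const, Pi.mul_def] using h

lemma aux_sum_liminf {n : ℕ} (f : Fin n → ℕ → ℝ≥0∞) :
    ∑ k, liminf (f k) atTop ≤ liminf (fun j => ∑ k, f k j) atTop := by
  classical
  induction (Finset.univ : Finset (Fin n)) using Finset.cons_induction with
  | empty => simp
  | cons a s ha ih =>
    rw [Finset.sum_cons]
    calc liminf (f a) atTop + ∑ k ∈ s, liminf (f k) atTop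
        ≤ liminf (f a) atTop + liminf (fun j => ∑ k ∈ s, f k j) atTop := by gcongr
      _ ≤ liminf (fun j => f a j + ∑ k ∈ s, f k j) atTop := aux_le_liminf_add _ _
      _ = liminf (fun j => ∑ k ∈ Finset.cons a s ha, f k j) atTop := by
          simp [Finset.sum_cons, Finset.sum_insert ha]

end AuxLiminf

/-- convergence of multi-parameter Tikhonov regularisation: assume
`F(x₀) = y` with `x₀ ∈ D`, `y^(l) → y` in `σ`, `F^(l) → F` in the `d_{K,L}`-sense, the
parameter conditions `(S(y,y^(l)) + d_{K,L}(F^(l),F)) / Σ_k α_k^(l) → 0` and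
`Σ_k α_k^(l) → 0` hold (with `K = {x : R_k(x) ≤ R_k(x₀)+1 for some k}`,
`L = {y} ∪ {y^(l)}`), `x^(l)` minimises `T(·; α^(l), y^(l), F^(l))`, and the normalised
parameters `ᾱ^(l) = α^(l)/Σ_k α_k^(l)` converge to `ᾱ`.  Then every subsequence of
`{x^(l)}` has a further subsequence `τ`-converging to some `x†` with `F(x†) = y` and
`Σ_k ᾱ_k R_k(x†) ≤ inf { Σ_k ᾱ_k R_k(x) : x ∈ D, F(x) = y }`. -/
theorem tikhonov_convergence {X Y : Type*} [TopologicalSpace X] {n : ℕ}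
    (S : Y → Y → ℝ) (hS0 : ∀ y z : Y, 0 ≤ S y z) (hSdef : ∀ y z : Y, S y z = 0 ↔ y = z)
    (R : Fin n → X → ℝ≥0∞)
    (hcoer : ∀ k, SeqCoercive (R k)) (hlsc : ∀ k, SeqLSC (R k))
    (F : X → Y) (F' : ℕ → X → Y) (hF : MemFtau S R F) (hF' : ∀ l, MemFtau S R (F' l))
    (hop : OpTendsto S F' F)
    (y : Y) (x₀ : X) (hx₀D : ∀ k, R k x₀ ≠ ⊤) (hx₀sol : F x₀ = y)
    (y' : ℕ → Y) (hy : SigmaTendsto S y' y)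
    (α : ℕ → Fin n → ℝ) (hα : ∀ l k, 0 ≤ α l k) (hαne : ∀ l, α l ≠ 0)
    (K : Set X) (hK : K = {x : X | ∃ k, R k x ≤ R k x₀ + 1})
    (L : Set Y) (hL : L = insert y (Set.range y'))
    (hcond : Tendsto
      (fun l => (ENNReal.ofReal (S y (y' l)) + dKL S K L (F' l) F)
          / ENNReal.ofReal (∑ k, α l k)) atTop (nhds 0))
    (hαto0 : Tendsto (fun l => ∑ k, α l k) atTop (nhds 0))
    (x' : ℕ → X)
    (hmin : ∀ l x, Tik S R (α l) (y' l) (F' l) (x' l) ≤ Tik S R (α l) (y' l) (F' l) x)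
    (αbar : Fin n → ℝ)
    (hαbar : ∀ k, Tendsto (fun l => α l k / ∑ j, α l j) atTop (nhds (αbar k))) :
    ∀ φ : ℕ → ℕ, StrictMono φ →
      ∃ ψ : ℕ → ℕ, StrictMono ψ ∧ ∃ xdag : X,
        Tendsto (fun l => x' (φ (ψ l))) atTop (nhds xdag) ∧ F xdag = y ∧
        ∀ x : X, (∀ k, R k x ≠ ⊤) → F x = y →
          ∑ k, ENNReal.ofReal (αbar k) * R k xdag
            ≤ ∑ k, ENNReal.ofReal (αbar k) * R k x := by
  classical
  intro φ hφ
  -- basic positivity facts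
  have hn : 0 < n := by
    rcases Nat.eq_zero_or_pos n with h0 | h
    · exfalso; apply hαne 0; funext k; exact absurd k.2 (by omega)
    · exact h
  have hspos : ∀ l, 0 < ∑ k, α l k := by
    intro l
    rcases (Finset.sum_nonneg fun k _ => hα l k).lt_or_eq with h | h
    · exact h
    · exfalso; apply hαne l; funext k
      exact (Finset.sum_eq_zero_iff_of_nonneg fun k _ => hα l k).1 h.symm k (Finset.mem_univ k)
  have hβ0 : ∀ l k, 0 ≤ α l k / ∑ j, α l j := fun l k => div_nonneg (hα l k) (hspos l).le
  have hβ1 : ∀ l k, α l k / ∑ j, α l j ≤ 1 := fun l k =>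
    (div_le_one (hspos l)).2 (Finset.single_le_sum (fun j _ => hα l j) (Finset.mem_univ k))
  have hβsum : ∀ l, ∑ k, α l k / ∑ j, α l j = 1 := by
    intro l; rw [← Finset.sum_div, div_self (hspos l).ne']
  have hαbar0 : ∀ k, 0 ≤ αbar k := fun k =>
    le_of_tendsto_of_tendsto' tendsto_const_nhds (hαbar k) fun l => hβ0 l k
  have hαbarsum : ∑ k, αbar k = 1 := by
    have h1 : Tendsto (fun l => ∑ k, α l k / ∑ j, α l j) atTop (nhds (∑ k, αbar k)) :=
      tendsto_finset_sum _ fun k _ => hαbar k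
    have h2 : Tendsto (fun _ : ℕ => (1 : ℝ)) atTop (nhds 1) := tendsto_const_nhds
    exact tendsto_nhds_unique (h1.congr fun l => hβsum l) h2
  have hx₀K : x₀ ∈ K := by rw [hK]; exact ⟨⟨0, hn⟩, le_self_add⟩
  have hy'L : ∀ l, y' l ∈ L := fun l => by rw [hL]; exact Set.mem_insert_of_mem _ ⟨l, rfl⟩
  -- the dKL bound
  have hdb : ∀ (G : X → Y) (x : X) (z : Y), x ∈ K → z ∈ L →
      ENNReal.ofReal (S (G x) z) ≤ ENNReal.ofReal (S (F x) z) + dKL S K L G F := by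
    intro G x z hx hz
    have h1 : S (G x) z ≤ S (F x) z + |S (G x) z - S (F x) z| := by
      have := le_abs_self (S (G x) z - S (F x) z); linarith
    calc ENNReal.ofReal (S (G x) z)
        ≤ ENNReal.ofReal (S (F x) z + |S (G x) z - S (F x) z|) := ENNReal.ofReal_le_ofReal h1
      _ ≤ ENNReal.ofReal (S (F x) z) + ENNReal.ofReal |S (G x) z - S (F x) z| :=
          ENNReal.ofReal_add_le
      _ ≤ ENNReal.ofReal (S (F x) z) + dKL S K L G F := by
          refine add_le_add le_rfl ?_
          refine le_trans ?_ (le_iSup₂ (f := fun x _ => ⨆ z ∈ L,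
            ENNReal.ofReal |S (G x) z - S (F x) z|) x hx)
          exact le_iSup₂ (f := fun z _ => ENNReal.ofReal |S (G x) z - S (F x) z|) z hz
  -- reversed dKL bound
  have hdb' : ∀ (l : ℕ) (x : X) (z : Y), x ∈ K → z ∈ L →
      ENNReal.ofReal (S (F x) z) ≤ ENNReal.ofReal (S ((F' l) x) z) + dKL S K L (F' l) F := by
    intro l x z hx hz
    have h1 : S (F x) z ≤ S ((F' l) x) z + |S ((F' l) x) z - S (F x) z| := by
      have := neg_abs_le (S ((F' l) x) z - S (F x) z); linarith
    calc ENNReal.ofReal (S (F x) z)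
        ≤ ENNReal.ofReal (S ((F' l) x) z + |S ((F' l) x) z - S (F x) z|) :=
          ENNReal.ofReal_le_ofReal h1
      _ ≤ ENNReal.ofReal (S ((F' l) x) z) + ENNReal.ofReal |S ((F' l) x) z - S (F x) z| :=
          ENNReal.ofReal_add_le
      _ ≤ _ := by
          refine add_le_add le_rfl ?_
          refine le_trans ?_ (le_iSup₂ (f := fun x _ => ⨆ z ∈ L,
            ENNReal.ofReal |S ((F' l) x) z - S (F x) z|) x hx)
          exact le_iSup₂ (f := fun z _ => ENNReal.ofReal |S ((F' l) x) z - S (F x) z|) z hz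
  -- minimality against competitors in K, un-normalised
  have hmin' : ∀ (l : ℕ) (x : X), x ∈ K → F x = y →
      ∑ k, ENNReal.ofReal (α l k) * R k (x' l)
        ≤ (ENNReal.ofReal (S y (y' l)) + dKL S K L (F' l) F)
            + ∑ k, ENNReal.ofReal (α l k) * R k x := by
    intro l x hx hxsol
    calc ∑ k, ENNReal.ofReal (α l k) * R k (x' l)
        ≤ Tik S R (α l) (y' l) (F' l) (x' l) := le_add_self
      _ ≤ Tik S R (α l) (y' l) (F' l) x := hmin l x
      _ = ENNReal.ofReal (S ((F' l) x) (y' l)) + ∑ k, ENNReal.ofReal (α l k) * R k x := rfl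
      _ ≤ (ENNReal.ofReal (S (F x) (y' l)) + dKL S K L (F' l) F)
            + ∑ k, ENNReal.ofReal (α l k) * R k x := by
          gcongr; exact hdb (F' l) x (y' l) hx (hy'L l)
      _ = _ := by rw [hxsol]
  -- normalised key estimate
  have hkey : ∀ (l : ℕ) (x : X), x ∈ K → F x = y →
      ∑ k, ENNReal.ofReal (α l k / ∑ j, α l j) * R k (x' l)
        ≤ (ENNReal.ofReal (S y (y' l)) + dKL S K L (F' l) F) / ENNReal.ofReal (∑ j, α l j)
            + ∑ k, ENNReal.ofReal (α l k / ∑ j, α l j) * R k x := by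
    intro l x hx hxsol
    have h2 := ENNReal.div_le_div_right (hmin' l x hx hxsol) (ENNReal.ofReal (∑ j, α l j))
    have e1 : ∀ z : X, (∑ k, ENNReal.ofReal (α l k) * R k z) / ENNReal.ofReal (∑ j, α l j)
        = ∑ k, ENNReal.ofReal (α l k / ∑ j, α l j) * R k z := by
      intro z
      rw [div_eq_mul_inv, Finset.sum_mul]
      refine Finset.sum_congr rfl fun k _ => ?_
      rw [mul_right_comm, ← div_eq_mul_inv, ← ENNReal.ofReal_div_of_pos (hspos l)]
    have e2 : ∀ a b : ℝ≥0∞, (a + b) / ENNReal.ofReal (∑ j, α l j)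
        = a / ENNReal.ofReal (∑ j, α l j) + b / ENNReal.ofReal (∑ j, α l j) := by
      intro a b; simp [div_eq_mul_inv, add_mul]
    rw [e1, e2, e1] at h2
    exact h2
  -- ε and its convergence
  have hε : Tendsto (fun l => (ENNReal.ofReal (S y (y' l)) + dKL S K L (F' l) F)
      / ENNReal.ofReal (∑ j, α l j)) atTop (nhds 0) := hcond
  have hstends : Tendsto (fun l => ENNReal.ofReal (∑ j, α l j)) atTop (nhds 0) := by
    have := (ENNReal.continuous_ofReal.tendsto 0).comp hαto0
    simpa [Function.comp_def] using this
  have hν : Tendsto (fun l => ENNReal.ofReal (S y (y' l)) + dKL S K L (F' l) F)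
      atTop (nhds 0) := by
    have heq : ∀ l, ENNReal.ofReal (S y (y' l)) + dKL S K L (F' l) F
        = ((ENNReal.ofReal (S y (y' l)) + dKL S K L (F' l) F)
            / ENNReal.ofReal (∑ j, α l j)) * ENNReal.ofReal (∑ j, α l j) := by
      intro l
      rw [ENNReal.div_mul_cancel (ENNReal.ofReal_pos.2 (hspos l)).ne' ENNReal.ofReal_ne_top]
    have := ENNReal.Tendsto.mul hε (Or.inr (by simp)) hstends (Or.inr (by simp))
    rw [mul_zero] at this
    exact Tendsto.congr (fun l => (heq l).symm) this
  have hd0 : Tendsto (fun l => dKL S K L (F' l) F) atTop (nhds 0) :=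
    tendsto_of_tendsto_of_tendsto_of_le_of_le' tendsto_const_nhds hν
      (Eventually.of_forall fun l => zero_le) (Eventually.of_forall fun l => le_add_self)
  have hSy0 : Tendsto (fun l => ENNReal.ofReal (S y (y' l))) atTop (nhds 0) :=
    tendsto_of_tendsto_of_tendsto_of_le_of_le' tendsto_const_nhds hν
      (Eventually.of_forall fun l => zero_le) (Eventually.of_forall fun l => le_self_add)
  -- the α-weighted value at x₀ tends to 0
  set M : ℝ≥0∞ := ∑ k, R k x₀ with hM
  have hMne : M ≠ ⊤ := ENNReal.sum_ne_top.2 fun k _ => hx₀D k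
  have hRx₀0 : Tendsto (fun l => ∑ k, ENNReal.ofReal (α l k) * R k x₀) atTop (nhds 0) := by
    have hb : ∀ l, ∑ k, ENNReal.ofReal (α l k) * R k x₀
        ≤ ENNReal.ofReal (∑ j, α l j) * M := by
      intro l
      rw [hM, Finset.mul_sum]
      refine Finset.sum_le_sum fun k _ => ?_
      exact mul_le_mul_left (ENNReal.ofReal_le_ofReal
        (Finset.single_le_sum (fun j _ => hα l j) (Finset.mem_univ k))) _
    have hm : Tendsto (fun l => ENNReal.ofReal (∑ j, α l j) * M) atTop (nhds 0) := by
      have := ENNReal.Tendsto.mul_const hstends (Or.inr hMne)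
      rwa [zero_mul] at this
    exact tendsto_of_tendsto_of_tendsto_of_le_of_le' tendsto_const_nhds hm
      (Eventually.of_forall fun l => zero_le) (Eventually.of_forall hb)
  -- the normalised value at x₀ is finite
  have hβx₀fin : ∀ l, ∑ k, ENNReal.ofReal (α l k / ∑ j, α l j) * R k x₀ ≠ ⊤ :=
    fun l => ENNReal.sum_ne_top.2 fun k _ =>
      ENNReal.mul_ne_top ENNReal.ofReal_ne_top (hx₀D k)
  have hβx₀M : ∀ l, ∑ k, ENNReal.ofReal (α l k / ∑ j, α l j) * R k x₀ ≤ M := by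
    intro l
    rw [hM]
    refine Finset.sum_le_sum fun k _ => ?_
    calc ENNReal.ofReal (α l k / ∑ j, α l j) * R k x₀
        ≤ 1 * R k x₀ := mul_le_mul_left (ENNReal.ofReal_le_one.2 (hβ1 l k)) _
      _ = R k x₀ := one_mul _
  -- eventually x' l ∈ K
  have hKev : ∀ᶠ l in atTop, x' l ∈ K := by
    filter_upwards [hε.eventually_lt_const (zero_lt_one)] with l hεl
    by_contra hxK
    rw [hK] at hxK
    simp only [Set.mem_setOf_eq, not_exists, not_le] at hxK
    have hlow : ∑ k, ENNReal.ofReal (α l k / ∑ j, α l j) * R k x₀ + 1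
        ≤ ∑ k, ENNReal.ofReal (α l k / ∑ j, α l j) * R k (x' l) := by
      have h1 : ∀ k : Fin n, ENNReal.ofReal (α l k / ∑ j, α l j) * (R k x₀ + 1)
          ≤ ENNReal.ofReal (α l k / ∑ j, α l j) * R k (x' l) :=
        fun k => mul_le_mul_right (hxK k).le _
      calc ∑ k, ENNReal.ofReal (α l k / ∑ j, α l j) * R k x₀ + 1
          = ∑ k, ENNReal.ofReal (α l k / ∑ j, α l j) * (R k x₀ + 1) := by
            rw [show ∑ k, ENNReal.ofReal (α l k / ∑ j, α l j) * (R k x₀ + 1)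
                = ∑ k, (ENNReal.ofReal (α l k / ∑ j, α l j) * R k x₀
                    + ENNReal.ofReal (α l k / ∑ j, α l j) * 1) from
              Finset.sum_congr rfl fun k _ => mul_add _ _ _, Finset.sum_add_distrib]
            congr 1
            simp only [mul_one]
            rw [← ENNReal.ofReal_sum_of_nonneg fun k _ => hβ0 l k, hβsum l,
              ENNReal.ofReal_one]
        _ ≤ _ := Finset.sum_le_sum fun k _ => h1 k
    have hup := hkey l x₀ hx₀K hx₀sol
    have : ∑ k, ENNReal.ofReal (α l k / ∑ j, α l j) * R k x₀ + 1
        ≤ (ENNReal.ofReal (S y (y' l)) + dKL S K L (F' l) F) / ENNReal.ofReal (∑ j, α l j)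
          + ∑ k, ENNReal.ofReal (α l k / ∑ j, α l j) * R k x₀ := hlow.trans hup
    rw [add_comm ((ENNReal.ofReal (S y (y' l)) + dKL S K L (F' l) F)
      / ENNReal.ofReal (∑ j, α l j))] at this
    have h1le := (ENNReal.add_le_add_iff_left (hβx₀fin l)).1 this
    exact absurd h1le (not_le.2 hεl)
  -- choose a coordinate with positive limit weight
  have hkstar : ∃ k : Fin n, 0 < αbar k := by
    by_contra h
    push_neg at h
    have : ∑ k, αbar k ≤ 0 := Finset.sum_nonpos fun k _ => h k
    rw [hαbarsum] at this
    exact absurd this (by norm_num)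
  obtain ⟨k₀, hk₀⟩ := hkstar
  -- eventual bound on R k₀ (x' l)
  set c : ℝ := αbar k₀ / 2 with hc
  have hc0 : 0 < c := half_pos hk₀
  set Cb : ℝ≥0∞ := (1 + M) / ENNReal.ofReal c with hCb
  have hCbne : Cb ≠ ⊤ :=
    (ENNReal.div_lt_top (by simp [hMne]) (by simp [hc0])).ne
  have hbdd : ∀ᶠ l in atTop, R k₀ (x' l) ≤ Cb := by
    filter_upwards [hε.eventually_lt_const zero_lt_one,
      (hαbar k₀).eventually_const_lt (half_lt_self hk₀)] with l hεl hβl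
    have h1 : ENNReal.ofReal c * R k₀ (x' l)
        ≤ ∑ k, ENNReal.ofReal (α l k / ∑ j, α l j) * R k (x' l) := by
      refine le_trans (mul_le_mul_left (ENNReal.ofReal_le_ofReal hβl.le) _) ?_
      exact Finset.single_le_sum (f := fun k => ENNReal.ofReal (α l k / ∑ j, α l j)
        * R k (x' l)) (fun k _ => zero_le) (Finset.mem_univ k₀)
    have h2 : ENNReal.ofReal c * R k₀ (x' l) ≤ 1 + M :=
      h1.trans ((hkey l x₀ hx₀K hx₀sol).trans (add_le_add hεl.le (hβx₀M l)))
    rw [hCb]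
    rw [ENNReal.le_div_iff_mul_le (Or.inl (by simp [hc0])) (Or.inl ENNReal.ofReal_ne_top)]
    rwa [mul_comm]
    -- extract a subsequence
  obtain ⟨N, hN⟩ := eventually_atTop.1 hbdd
  obtain ⟨xdag, χ, hχ, hχconv⟩ := hcoer k₀ (fun j => x' (φ (N + j))) Cb hCbne
    (fun j => hN _ ((Nat.le_add_right N j).trans (hφ.le_apply)))
  have hm_mono : StrictMono (fun j => φ (N + χ j)) :=
    hφ.comp fun a b hab => Nat.add_lt_add_left (hχ hab) N
  have hm_tend : Tendsto (fun j => φ (N + χ j)) atTop atTop := hm_mono.tendsto_atTop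
  have hxs : Tendsto (fun j => x' (φ (N + χ j))) atTop (nhds xdag) := hχconv
  have hys : SigmaTendsto S (fun j => y' (φ (N + χ j))) y := fun z => (hy z).comp hm_tend
  -- F xdag = y
  have hFxdag : F xdag = y := by
    have hSb : ∀ᶠ l in atTop, ENNReal.ofReal (S (F (x' l)) (y' l))
        ≤ ((ENNReal.ofReal (S y (y' l)) + dKL S K L (F' l) F)
            + dKL S K L (F' l) F) + ∑ k, ENNReal.ofReal (α l k) * R k x₀ := by
      filter_upwards [hKev] with l hxK
      calc ENNReal.ofReal (S (F (x' l)) (y' l))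
          ≤ ENNReal.ofReal (S ((F' l) (x' l)) (y' l)) + dKL S K L (F' l) F :=
            hdb' l (x' l) (y' l) hxK (hy'L l)
        _ ≤ Tik S R (α l) (y' l) (F' l) (x' l) + dKL S K L (F' l) F := by
            gcongr; exact le_self_add
        _ ≤ Tik S R (α l) (y' l) (F' l) x₀ + dKL S K L (F' l) F := by
            gcongr; exact hmin l x₀
        _ = (ENNReal.ofReal (S ((F' l) x₀) (y' l)) + ∑ k, ENNReal.ofReal (α l k) * R k x₀)
              + dKL S K L (F' l) F := rfl
        _ ≤ ((ENNReal.ofReal (S (F x₀) (y' l)) + dKL S K L (F' l) F)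
              + ∑ k, ENNReal.ofReal (α l k) * R k x₀) + dKL S K L (F' l) F := by
            gcongr; exact hdb (F' l) x₀ (y' l) hx₀K (hy'L l)
        _ = ((ENNReal.ofReal (S y (y' l)) + dKL S K L (F' l) F)
              + dKL S K L (F' l) F) + ∑ k, ENNReal.ofReal (α l k) * R k x₀ := by
            rw [hx₀sol]; ring
    have hRHS0 : Tendsto (fun l => ((ENNReal.ofReal (S y (y' l)) + dKL S K L (F' l) F)
        + dKL S K L (F' l) F) + ∑ k, ENNReal.ofReal (α l k) * R k x₀) atTop (nhds 0) := by
      have := (hν.add hd0).add hRx₀0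
      simpa using this
    have hS0' : Tendsto (fun l => ENNReal.ofReal (S (F (x' l)) (y' l))) atTop (nhds 0) :=
      tendsto_of_tendsto_of_tendsto_of_le_of_le' tendsto_const_nhds hRHS0
        (Eventually.of_forall fun l => zero_le) hSb
    have hSreal : Tendsto (fun j => S (F (x' (φ (N + χ j)))) (y' (φ (N + χ j))))
        atTop (nhds 0) := by
      have h1 := hS0'.comp hm_tend
      have h2 := (ENNReal.tendsto_toReal (by simp : (0 : ℝ≥0∞) ≠ ⊤)).comp h1
      simp only [Function.comp_def, ENNReal.toReal_zero] at h2
      exact h2.congr fun j => ENNReal.toReal_ofReal (hS0 _ _)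
    have hlim := hF.1 (fun j => x' (φ (N + χ j))) xdag (fun j => y' (φ (N + χ j))) y hxs hys
    rw [hSreal.liminf_eq] at hlim
    exact (hSdef _ _).1 (le_antisymm hlim (hS0 _ _))
  refine ⟨fun j => N + χ j, fun a b hab => Nat.add_lt_add_left (hχ hab) N, xdag, hχconv,
    hFxdag, ?_⟩
  -- the minimality property: first for competitors in K
  have hfinK : ∀ x : X, (∀ k, R k x ≠ ⊤) → F x = y → x ∈ K →
      ∑ k, ENNReal.ofReal (αbar k) * R k xdag ≤ ∑ k, ENNReal.ofReal (αbar k) * R k x := by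
    intro x hxfin hxsol hxK
    set A : ℝ≥0∞ := ∑ k, ENNReal.ofReal (αbar k) * R k x with hA
    have hRHS : Tendsto (fun j =>
        (ENNReal.ofReal (S y (y' (φ (N + χ j)))) + dKL S K L (F' (φ (N + χ j))) F)
          / ENNReal.ofReal (∑ i, α (φ (N + χ j)) i)
        + ∑ k, ENNReal.ofReal (α (φ (N + χ j)) k / ∑ i, α (φ (N + χ j)) i) * R k x)
        atTop (nhds A) := by
      have h1 := hε.comp hm_tend
      have h2 : Tendsto (fun j => ∑ k,
          ENNReal.ofReal (α (φ (N + χ j)) k / ∑ i, α (φ (N + χ j)) i) * R k x)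
          atTop (nhds A) := by
        rw [hA]
        refine tendsto_finset_sum _ fun k _ => ?_
        have h3 := ((ENNReal.continuous_ofReal.tendsto _).comp ((hαbar k).comp hm_tend))
        exact ENNReal.Tendsto.mul_const h3 (Or.inr (hxfin k))
      have := h1.add h2
      simpa using this
    have hliminfA := hRHS.liminf_eq
    have key : ∀ a : ℝ≥0∞, a < 1 →
        a * ∑ k, ENNReal.ofReal (αbar k) * R k xdag ≤ A := by
      intro a ha
      have lsc1 : ∑ k, ENNReal.ofReal (αbar k) * R k xdag
          ≤ liminf (fun j => ∑ k, ENNReal.ofReal (αbar k) * R k (x' (φ (N + χ j))))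
              atTop := by
        refine le_trans (Finset.sum_le_sum fun k _ => ?_) (aux_sum_liminf _)
        exact le_trans (mul_le_mul_right (hlsc k _ xdag hxs) _) (aux_mul_liminf _ _)
      have lsc2 : a * ∑ k, ENNReal.ofReal (αbar k) * R k xdag
          ≤ liminf (fun j =>
              a * ∑ k, ENNReal.ofReal (αbar k) * R k (x' (φ (N + χ j)))) atTop :=
        (mul_le_mul_right lsc1 a).trans (aux_mul_liminf a _)
      have hco : ∀ k : Fin n, ∀ᶠ j in atTop,
          a * ENNReal.ofReal (αbar k)
            ≤ ENNReal.ofReal (α (φ (N + χ j)) k / ∑ i, α (φ (N + χ j)) i) := by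
        intro k
        rcases (hαbar0 k).eq_or_lt with h0 | hpos
        · exact Eventually.of_forall fun j => by simp [← h0]
        · have hlt : a * ENNReal.ofReal (αbar k) < ENNReal.ofReal (αbar k) := by
            calc a * ENNReal.ofReal (αbar k)
                < 1 * ENNReal.ofReal (αbar k) :=
                  (by rw [mul_comm a, mul_comm 1]
                      exact ENNReal.mul_lt_mul_right (ENNReal.ofReal_pos.2 hpos).ne' ENNReal.ofReal_ne_top ha)
              _ = _ := one_mul _
          have h3 := ((ENNReal.continuous_ofReal.tendsto _).comp ((hαbar k).comp hm_tend))
          exact (h3.eventually_const_lt hlt).mono fun j hj => hj.le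
      have hall : ∀ᶠ j in atTop, ∀ k : Fin n,
          a * ENNReal.ofReal (αbar k)
            ≤ ENNReal.ofReal (α (φ (N + χ j)) k / ∑ i, α (φ (N + χ j)) i) :=
        eventually_all.2 hco
      have hev : ∀ᶠ j in atTop,
          a * ∑ k, ENNReal.ofReal (αbar k) * R k (x' (φ (N + χ j)))
            ≤ (ENNReal.ofReal (S y (y' (φ (N + χ j))))
                  + dKL S K L (F' (φ (N + χ j))) F)
                / ENNReal.ofReal (∑ i, α (φ (N + χ j)) i)
              + ∑ k, ENNReal.ofReal (α (φ (N + χ j)) k / ∑ i, α (φ (N + χ j)) i)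
                  * R k x := by
        filter_upwards [hall] with j hj
        calc a * ∑ k, ENNReal.ofReal (αbar k) * R k (x' (φ (N + χ j)))
            = ∑ k, (a * ENNReal.ofReal (αbar k)) * R k (x' (φ (N + χ j))) := by
              rw [Finset.mul_sum]; exact Finset.sum_congr rfl fun k _ => (mul_assoc _ _ _).symm
          _ ≤ ∑ k, ENNReal.ofReal (α (φ (N + χ j)) k / ∑ i, α (φ (N + χ j)) i)
                * R k (x' (φ (N + χ j))) :=
              Finset.sum_le_sum fun k _ => mul_le_mul_left (hj k) _
          _ ≤ _ := hkey (φ (N + χ j)) x hxK hxsol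
      have hlim2 : liminf (fun j =>
          a * ∑ k, ENNReal.ofReal (αbar k) * R k (x' (φ (N + χ j)))) atTop ≤ A := by
        rw [← hliminfA]
        exact liminf_le_liminf hev
      exact lsc2.trans hlim2
    have h1 := ENNReal.mul_le_of_forall_lt
      (a := 1) (b := ∑ k, ENNReal.ofReal (αbar k) * R k xdag) (c := A)
      fun a' ha' b' hb' => le_trans (mul_le_mul_right hb'.le a') (key a' ha')
    simpa using h1
  -- conclusion for arbitrary competitors
  intro x hxfin hxsol
  by_cases hxK : x ∈ K
  · exact hfinK x hxfin hxsol hxK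
  · rw [hK] at hxK
    simp only [Set.mem_setOf_eq, not_exists, not_le] at hxK
    calc ∑ k, ENNReal.ofReal (αbar k) * R k xdag
        ≤ ∑ k, ENNReal.ofReal (αbar k) * R k x₀ := hfinK x₀ hx₀D hx₀sol hx₀K
      _ ≤ ∑ k, ENNReal.ofReal (αbar k) * R k x := by
        refine Finset.sum_le_sum fun k _ => mul_le_mul_right ?_ _
        exact (le_self_add.trans_lt (hxK k)).le
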